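/- Let (r_i)_{i≥1} be an increasing sequence of elements of |F^×| with r_i → ∞. Suppose that for each i we are given g_i ∈ A^m(r_i), and for each pair i < j a unit u_{i,j} of A^m(r_i), such that g_i = u_{i,j}·g_j holds in A^m(r_i). Then there exist an entire function G on F^m and units v_i of A^m(r_i) such that g_i = G·v_i in A^m(r_i) for every i. -/

import Mathlib

open MvPowerSeries Filter

set_option linter.unusedSectionVars false

namespace NA

variable (F : Type) [NormedField F] [IsUltrametricDist F]

/-- The value group `|F^×|` of a normed field, as a set of real numbers. -/
def VG : Set ℝ := {r | ∃ c : F, c ≠ 0 ∧ ‖c‖ = r}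

lemma VG.pos {r : ℝ} (hr : r ∈ VG F) : 0 < r := by
  obtain ⟨c, hc, rfl⟩ := hr
  exact norm_pos_iff.mpr hc

/-- The total degree `|γ|` of a multi-index. -/
def mdeg {m : ℕ} (γ : Fin m →₀ ℕ) : ℕ := γ.sum fun _ n => n

lemma mdeg_add {m : ℕ} (α β : Fin m →₀ ℕ) : mdeg (α + β) = mdeg α + mdeg β :=
  Finsupp.sum_add_index' (fun _ => rfl) (fun _ _ _ => rfl)

/-- The ring `A^m(r)` of power series converging on the closed ball of radius `r`:
those `f = Σ a_γ z^γ` with `|a_γ| r^{|γ|} → 0` as `|γ| → ∞`. -/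
def A (m : ℕ) (r : ℝ) : Subring (MvPowerSeries (Fin m) F) where
  carrier := {f | Tendsto (fun γ : Fin m →₀ ℕ => ‖coeff γ f‖ * r ^ mdeg γ)
    cofinite (nhds 0)}
  zero_mem' := by
    simp only [Set.mem_setOf_eq, map_zero, norm_zero, zero_mul]
    exact tendsto_const_nhds
  one_mem' := by
    refine tendsto_const_nhds.congr' ?_
    refine Filter.eventuallyEq_of_mem ((Set.finite_singleton (0 : Fin m →₀ ℕ)).compl_mem_cofinite) ?_
    intro γ hγ
    have : (γ : Fin m →₀ ℕ) ≠ 0 := by simpa using hγ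
    simp [MvPowerSeries.coeff_one, this]
  add_mem' := by
    intro f g hf hg
    simp only [Set.mem_setOf_eq] at hf hg ⊢
    rw [tendsto_zero_iff_abs_tendsto_zero] at hf hg ⊢
    refine squeeze_zero (fun γ => abs_nonneg _) (fun γ => ?_) (by simpa using hf.add hg)
    simp only [Function.comp_apply, abs_mul, abs_norm, map_add, ← add_mul, abs_pow]
    exact mul_le_mul_of_nonneg_right (norm_add_le _ _) (by positivity)
  neg_mem' := by
    intro f hf
    simpa only [Set.mem_setOf_eq, map_neg, norm_neg] using hf
  mul_mem' := by
    intro f g hf hg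
    simp only [Set.mem_setOf_eq] at hf hg ⊢
    rw [tendsto_zero_iff_abs_tendsto_zero] at hf hg ⊢
    have habs : ∀ (h : MvPowerSeries (Fin m) F),
        (abs ∘ fun γ : Fin m →₀ ℕ => ‖coeff γ h‖ * r ^ mdeg γ)
          = fun γ => ‖coeff γ h‖ * |r| ^ mdeg γ := by
      intro h; funext γ
      simp [Function.comp_apply, abs_mul, abs_pow]
    rw [habs] at hf hg ⊢
    set v := fun (h : MvPowerSeries (Fin m) F) (γ : Fin m →₀ ℕ) =>
      ‖coeff γ h‖ * |r| ^ mdeg γ with hv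
    have vnonneg : ∀ h γ, 0 ≤ v h γ := fun h γ => by positivity
    have finlt : ∀ (h : MvPowerSeries (Fin m) F),
        Tendsto (v h) cofinite (nhds 0) → ∀ δ : ℝ, 0 < δ → {γ | ¬ v h γ < δ}.Finite := by
      intro h hh δ hδ
      have := (Metric.tendsto_nhds.mp hh) δ hδ
      rw [Filter.eventually_cofinite] at this
      refine this.subset ?_
      intro γ hγ
      simp only [Set.mem_setOf_eq, Real.dist_eq, sub_zero] at *
      intro hc; exact hγ (lt_of_abs_lt hc)
    have bound : ∀ (h : MvPowerSeries (Fin m) F),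
        Tendsto (v h) cofinite (nhds 0) → ∃ M : ℝ, 1 ≤ M ∧ ∀ γ, v h γ ≤ M := by
      intro h hh
      have h1 := finlt h hh 1 one_pos
      refine ⟨1 + ∑ γ ∈ h1.toFinset, v h γ,
        le_add_of_nonneg_right (Finset.sum_nonneg fun γ _ => vnonneg h γ), ?_⟩
      intro γ
      by_cases hγ : γ ∈ h1.toFinset
      · have := Finset.single_le_sum (f := v h) (fun γ _ => vnonneg h γ) hγ
        linarith
      · simp only [Set.Finite.mem_toFinset, Set.mem_setOf_eq, not_not] at hγ
        have hs : (0:ℝ) ≤ ∑ γ ∈ h1.toFinset, v h γ :=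
          Finset.sum_nonneg fun γ _ => vnonneg h γ
        linarith
    rw [Metric.tendsto_nhds]
    intro ε hε
    rw [Filter.eventually_cofinite]
    obtain ⟨Mf, hMf1, hMf⟩ := bound f hf
    obtain ⟨Mg, hMg1, hMg⟩ := bound g hg
    set M := max Mf Mg with hMdef
    have hM1 : (1:ℝ) ≤ M := le_trans hMf1 (le_max_left _ _)
    have hM0 : (0:ℝ) < M := lt_of_lt_of_le one_pos hM1
    set δ := ε / M with hδdef
    have hδ0 : 0 < δ := div_pos hε hM0
    have hSf := finlt f hf δ hδ0
    have hSg := finlt g hg δ hδ0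
    refine ((hSf.prod hSg).image
      (fun p : (Fin m →₀ ℕ) × (Fin m →₀ ℕ) => p.1 + p.2)).subset ?_
    intro γ hγ
    simp only [Set.mem_setOf_eq, Real.dist_eq, sub_zero] at hγ
    have hγ' : ε ≤ v (f * g) γ := by
      rw [abs_of_nonneg (vnonneg (f*g) γ)] at hγ
      exact not_lt.mp hγ
    have hne : (Finset.HasAntidiagonal.antidiagonal γ).Nonempty := ⟨(γ, 0), by simp⟩
    obtain ⟨p, hp, hple⟩ := IsUltrametricDist.exists_norm_finset_sum_le_of_nonempty hne
      (fun p : (Fin m →₀ ℕ) × (Fin m →₀ ℕ) => coeff p.1 f * coeff p.2 g)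
    have hpsum : p.1 + p.2 = γ := Finset.HasAntidiagonal.mem_antidiagonal.mp hp
    have key : v (f * g) γ ≤ v f p.1 * v g p.2 := by
      have hdeg : mdeg γ = mdeg p.1 + mdeg p.2 := by
        rw [← hpsum, mdeg_add]
      calc v (f * g) γ = ‖coeff γ (f * g)‖ * |r| ^ mdeg γ := rfl
        _ ≤ ‖coeff p.1 f * coeff p.2 g‖ * |r| ^ mdeg γ := by
            refine mul_le_mul_of_nonneg_right ?_ (by positivity)
            rw [MvPowerSeries.coeff_mul]
            exact hple
        _ = (‖coeff p.1 f‖ * |r| ^ mdeg p.1) * (‖coeff p.2 g‖ * |r| ^ mdeg p.2) := by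
            rw [norm_mul, hdeg, pow_add]; ring
    refine ⟨p, ⟨?_, ?_⟩, hpsum⟩
    · simp only [Set.mem_setOf_eq, not_lt]
      have h1 : ε ≤ v f p.1 * M := by
        refine hγ'.trans (key.trans ?_)
        exact mul_le_mul_of_nonneg_left ((hMg p.2).trans (le_max_right _ _)) (vnonneg f p.1)
      exact (div_le_iff₀ hM0).mpr h1
    · simp only [Set.mem_setOf_eq, not_lt]
      have h1 : ε ≤ M * v g p.2 := by
        refine hγ'.trans (key.trans ?_)
        exact mul_le_mul_of_nonneg_right ((hMf p.1).trans (le_max_left _ _)) (vnonneg g p.2)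
      rw [hδdef, div_le_iff₀' hM0]
      exact h1

lemma mem_A_iff {m : ℕ} {r : ℝ} {f : MvPowerSeries (Fin m) F} :
    f ∈ A F m r ↔ Tendsto (fun γ : Fin m →₀ ℕ => ‖coeff γ f‖ * r ^ mdeg γ)
      cofinite (nhds 0) := Iff.rfl

instance {m : ℕ} : IsDomain (MvPowerSeries (Fin m) F) :=
  NoZeroDivisors.to_isDomain _

/-- The Gauss norm `|f|_r = sup_γ |a_γ| r^{|γ|}`. -/
noncomputable def nrm (r : ℝ) {m : ℕ} (f : MvPowerSeries (Fin m) F) : ℝ :=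
  ⨆ γ : Fin m →₀ ℕ, ‖coeff γ f‖ * r ^ mdeg γ

/-- For `0 < r ≤ R`, `A^m(R) ⊆ A^m(r)`. -/
lemma A_mono {m : ℕ} {r R : ℝ} (h0 : 0 < r) (hrR : r ≤ R) : A F m R ≤ A F m r := by
  intro f hf
  rw [mem_A_iff] at hf ⊢
  refine squeeze_zero (fun γ => by positivity) (fun γ => ?_) hf
  exact mul_le_mul_of_nonneg_left (pow_le_pow_left₀ h0.le hrR _) (norm_nonneg _)

/-- Evaluation of a power series at a point, as a (possibly junk) sum. -/
noncomputable def eval {m : ℕ} (f : MvPowerSeries (Fin m) F) (z : Fin m → F) : F :=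
  ∑' γ : Fin m →₀ ℕ, coeff γ f * ∏ i, z i ^ (γ i)

/-- The ring of integers `{a : |a| ≤ 1}` of `F`. -/
def O : Subring F where
  carrier := {a | ‖a‖ ≤ 1}
  zero_mem' := by simp
  one_mem' := by simp
  add_mem' := by
    intro a b ha hb
    exact (IsUltrametricDist.norm_add_le_max a b).trans (max_le ha hb)
  neg_mem' := by intro a ha; simpa using ha
  mul_mem' := by
    intro a b ha hb
    rw [Set.mem_setOf_eq, norm_mul]
    exact mul_le_one₀ ha (norm_nonneg b) hb

/-- The maximal ideal `{a : |a| < 1}` of the ring of integers. -/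
def mIdeal : Ideal (O F) where
  carrier := {a | ‖(a : F)‖ < 1}
  zero_mem' := by simp
  add_mem' := by
    intro a b ha hb
    exact lt_of_le_of_lt (IsUltrametricDist.norm_add_le_max (a : F) b) (max_lt ha hb)
  smul_mem' := by
    intro c a ha
    simp only [Set.mem_setOf_eq, smul_eq_mul] at ha ⊢
    rw [Subring.coe_mul, norm_mul]
    exact mul_lt_one_of_nonneg_of_lt_one_right c.2 (norm_nonneg _) ha

/-- The residue class field of `F`. -/
def Res := O F ⧸ mIdeal F

noncomputable instance : CommRing (Res F) := by unfold Res; infer_instance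

/-- Reduction of an element of absolute value at most `1` to the residue field. -/
noncomputable def red (a : F) (h : ‖a‖ ≤ 1) : Res F :=
  Ideal.Quotient.mk (mIdeal F) ⟨a, h⟩

/-- The ring of entire functions on `F^m`: power series lying in every `A^m(r)`. -/
def Ent (m : ℕ) : Subring (MvPowerSeries (Fin m) F) where
  carrier := {f | ∀ r ∈ VG F, f ∈ A F m r}
  zero_mem' := fun r _ => (A F m r).zero_mem
  one_mem' := fun r _ => (A F m r).one_mem
  add_mem' := fun hf hg r hr => (A F m r).add_mem (hf r hr) (hg r hr)
  neg_mem' := fun hf r hr => (A F m r).neg_mem (hf r hr)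
  mul_mem' := fun hf hg r hr => (A F m r).mul_mem (hf r hr) (hg r hr)

lemma mem_Ent_iff {m : ℕ} {f : MvPowerSeries (Fin m) F} :
    f ∈ Ent F m ↔ ∀ r ∈ VG F, f ∈ A F m r := Iff.rfl

/-- `d` is a greatest common divisor of the family `s`. -/
def IsGCDOf {α : Type*} [CommRing α] {ι : Type*} (d : α) (s : ι → α) : Prop :=
  (∀ i, d ∣ s i) ∧ ∀ e : α, (∀ i, e ∣ s i) → e ∣ d

section LastVariable

variable (m : ℕ)

/-- The subring of power series in `m+1` variables not depending on the last variable. -/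
def indepLast : Subring (MvPowerSeries (Fin (m+1)) F) where
  carrier := {f | ∀ γ : Fin (m+1) →₀ ℕ, γ (Fin.last m) ≠ 0 → coeff γ f = 0}
  zero_mem' := by intro γ _; simp
  one_mem' := by
    intro γ hγ
    have h : γ ≠ 0 := fun h => hγ (by simp [h])
    simp [MvPowerSeries.coeff_one, h]
  add_mem' := by
    intro f g hf hg γ hγ
    simp [map_add, hf γ hγ, hg γ hγ]
  neg_mem' := by
    intro f hf γ hγ
    simp [hf γ hγ]
  mul_mem' := by
    intro f g hf hg γ hγ
    rw [MvPowerSeries.coeff_mul]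
    refine Finset.sum_eq_zero fun p hp => ?_
    have hpsum : p.1 + p.2 = γ := Finset.HasAntidiagonal.mem_antidiagonal.mp hp
    by_cases h1 : p.1 (Fin.last m) = 0
    · have h2 : p.2 (Fin.last m) ≠ 0 := by
        intro h2
        apply hγ
        rw [← hpsum, Finsupp.add_apply, h1, h2]
      rw [hg p.2 h2, mul_zero]
    · rw [hf p.1 h1, zero_mul]

/-- The ring `A^{m-1}(r)`: analytic functions not depending on the last variable. -/
noncomputable def Aprev (r : ℝ) : Subring (MvPowerSeries (Fin (m+1)) F) :=
  A F (m+1) r ⊓ indepLast F m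

lemma Aprev_le (r : ℝ) : Aprev F m r ≤ A F (m+1) r := inf_le_left

lemma X_mem (r : ℝ) {k : ℕ} (i : Fin k) : (X i : MvPowerSeries (Fin k) F) ∈ A F k r := by
  rw [mem_A_iff]
  refine tendsto_const_nhds.congr' ?_
  refine Filter.eventuallyEq_of_mem
    ((Set.finite_singleton (Finsupp.single i 1)).compl_mem_cofinite) ?_
  intro γ hγ
  have h : γ ≠ Finsupp.single i 1 := by simpa using hγ
  simp [MvPowerSeries.X, MvPowerSeries.coeff_monomial, h]

/-- The last coordinate function `z_m` as an element of `A^m(r)`. -/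
noncomputable def zmA (r : ℝ) : A F (m+1) r :=
  ⟨X (Fin.last m), X_mem F r (Fin.last m)⟩

/-- Interpret a polynomial `W ∈ A^{m-1}(r)[z_m]` as an analytic function in `A^m(r)`. -/
noncomputable def toAm (r : ℝ) (W : Polynomial (Aprev F m r)) : A F (m+1) r :=
  Polynomial.eval₂ (Subring.inclusion (Aprev_le F m r)) (zmA F m r) W

/-- `W ∈ A^{m-1}(r)[z_m]` is a Weierstrass polynomial of degree `n = deg W`:
it is monic and `|W|_r = r^n`. -/
def IsWeierstrass (r : ℝ) (W : Polynomial (Aprev F m r)) : Prop :=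
  W.Monic ∧ nrm F r ((toAm F m r W : A F (m+1) r) : MvPowerSeries (Fin (m+1)) F)
    = r ^ W.natDegree

/-- The coefficient `A_j` of `z_m^j` when `f` is written as `Σ_j A_j(z') z_m^j`,
viewed as a power series not involving the last variable. -/
noncomputable def slice (f : MvPowerSeries (Fin (m+1)) F) (j : ℕ) :
    MvPowerSeries (Fin (m+1)) F :=
  fun γ => if γ (Fin.last m) = 0 then
    coeff (γ + Finsupp.single (Fin.last m) j) f else 0

/-- `f` is `z_m`-distinguished of degree `n` in `A^m(r)`: writing `f = Σ_j A_j z_m^j`,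
`A_n` is a unit in `A^{m-1}(r)`, `|f|_r = |A_n|_r r^n`, and `|A_j|_r r^j < |A_n|_r r^n`
for `j > n`. -/
def IsDistinguished (r : ℝ) (f : MvPowerSeries (Fin (m+1)) F) (n : ℕ) : Prop :=
  (∃ h : slice F m f n ∈ Aprev F m r, IsUnit (⟨slice F m f n, h⟩ : Aprev F m r)) ∧
  nrm F r f = nrm F r (slice F m f n) * r ^ n ∧
  ∀ j : ℕ, n < j → nrm F r (slice F m f j) * r ^ j < nrm F r (slice F m f n) * r ^ n

/-- The linear forms `z_i + u_i z_m` (and `z_m` for `i = m`) defining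
the change of variables `σ_u`. -/
noncomputable def linSub (u : Fin m → F) (i : Fin (m+1)) : MvPolynomial (Fin (m+1)) F :=
  MvPolynomial.X i + (if h : (i : ℕ) < m then
    MvPolynomial.C (u ⟨i, h⟩) * MvPolynomial.X (Fin.last m) else 0)

/-- The composition `f ∘ σ_u`, where
`σ_u(z_1,…,z_m) = (z_1 + u_1 z_m, …, z_{m-1} + u_{m-1} z_m, z_m)`. -/
noncomputable def sigmaSub (u : Fin m → F) (f : MvPowerSeries (Fin (m+1)) F) :
    MvPowerSeries (Fin (m+1)) F :=
  fun δ => ∑ t ∈ Finset.Nat.antidiagonalTuple (m+1) (mdeg δ),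
    coeff (Finsupp.equivFunOnFinite.symm t) f *
      MvPolynomial.coeff δ (∏ i, linSub F m u i ^ t i)

end LastVariable

/-- The formal partial derivative `∂f/∂z_j` of a power series. -/
noncomputable def pderiv {m : ℕ} (j : Fin m) (f : MvPowerSeries (Fin m) F) :
    MvPowerSeries (Fin m) F :=
  fun γ => ((γ j + 1 : ℕ) : F) * coeff (γ + Finsupp.single j 1) f

section Glue

variable {m : ℕ}

/-- The Gauss value `|a_γ| r^{|γ|}` of the `γ` coefficient. -/
noncomputable def gv (r : ℝ) (f : MvPowerSeries (Fin m) F) (γ : Fin m →₀ ℕ) : ℝ :=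
  ‖coeff γ f‖ * r ^ mdeg γ

lemma gv_nonneg {r : ℝ} (hr : 0 ≤ r) (f : MvPowerSeries (Fin m) F) (γ : Fin m →₀ ℕ) :
    0 ≤ gv F r f γ :=
  mul_nonneg (norm_nonneg _) (pow_nonneg hr _)

lemma gv_zero (r : ℝ) (γ : Fin m →₀ ℕ) : gv F r (0 : MvPowerSeries (Fin m) F) γ = 0 := by
  simp [gv]

lemma mdeg_zero : mdeg (0 : Fin m →₀ ℕ) = 0 := by simp [mdeg]

lemma gv_zero_index (r : ℝ) (f : MvPowerSeries (Fin m) F) :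
    gv F r f 0 = ‖coeff 0 f‖ := by
  simp [gv, mdeg_zero]

lemma gv_one_le {r : ℝ} (γ : Fin m →₀ ℕ) : gv F r (1 : MvPowerSeries (Fin m) F) γ ≤ 1 := by
  by_cases h : γ = 0
  · subst h; simp [gv, mdeg_zero, MvPowerSeries.coeff_one]
  · simp [gv, MvPowerSeries.coeff_one, h]

lemma gv_neg (r : ℝ) (f : MvPowerSeries (Fin m) F) (γ : Fin m →₀ ℕ) :
    gv F r (-f) γ = gv F r f γ := by
  simp [gv]

lemma gv_add_le {r : ℝ} (hr : 0 ≤ r) (f g : MvPowerSeries (Fin m) F) (γ : Fin m →₀ ℕ) :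
    gv F r (f + g) γ ≤ max (gv F r f γ) (gv F r g γ) := by
  have h := IsUltrametricDist.norm_add_le_max (coeff γ f) (coeff γ g)
  have := mul_le_mul_of_nonneg_right h (pow_nonneg hr (mdeg γ))
  simpa [gv, max_mul_of_nonneg _ _ (pow_nonneg hr (mdeg γ))] using this

lemma gv_sub_le {r : ℝ} (hr : 0 ≤ r) (f g : MvPowerSeries (Fin m) F) (γ : Fin m →₀ ℕ) :
    gv F r (f - g) γ ≤ max (gv F r f γ) (gv F r g γ) := by
  rw [sub_eq_add_neg]
  simpa [gv_neg] using gv_add_le F hr f (-g) γ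

lemma mem_A_iff_gv {r : ℝ} {f : MvPowerSeries (Fin m) F} :
    f ∈ A F m r ↔ Tendsto (gv F r f) cofinite (nhds 0) := Iff.rfl

lemma finite_gv_ge {r : ℝ} {f : MvPowerSeries (Fin m) F} (hf : f ∈ A F m r) (hr : 0 ≤ r)
    {δ : ℝ} (hδ : 0 < δ) : {γ : Fin m →₀ ℕ | δ ≤ gv F r f γ}.Finite := by
  have h := Metric.tendsto_nhds.mp (mem_A_iff_gv F |>.mp hf) δ hδ
  rw [Filter.eventually_cofinite] at h
  refine h.subset fun γ hγ => ?_
  simp only [Set.mem_setOf_eq, Real.dist_eq, sub_zero] at *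
  rw [abs_of_nonneg (gv_nonneg F hr f γ)]
  exact not_lt.mpr hγ

lemma exists_gv_bound {r : ℝ} {f : MvPowerSeries (Fin m) F} (hf : f ∈ A F m r) (hr : 0 ≤ r) :
    ∃ M : ℝ, 0 < M ∧ ∀ γ, gv F r f γ ≤ M := by
  have h1 := finite_gv_ge F hf hr one_pos
  have hs : (0:ℝ) ≤ ∑ γ ∈ h1.toFinset, gv F r f γ :=
    Finset.sum_nonneg fun γ _ => gv_nonneg F hr f γ
  refine ⟨1 + ∑ γ ∈ h1.toFinset, gv F r f γ, by linarith, ?_⟩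
  intro γ
  by_cases hγ : γ ∈ h1.toFinset
  · have := Finset.single_le_sum (f := gv F r f) (fun γ _ => gv_nonneg F hr f γ) hγ
    linarith
  · simp only [Set.Finite.mem_toFinset, Set.mem_setOf_eq, not_le] at hγ
    have hs : (0:ℝ) ≤ ∑ γ ∈ h1.toFinset, gv F r f γ :=
      Finset.sum_nonneg fun γ _ => gv_nonneg F hr f γ
    linarith

lemma exists_gv_max {r : ℝ} {f : MvPowerSeries (Fin m) F} (hf : f ∈ A F m r) (hr : 0 < r)
    (h0 : f ≠ 0) : ∃ γ0, 0 < gv F r f γ0 ∧ ∀ γ, gv F r f γ ≤ gv F r f γ0 := by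
  have hex : ∃ γ1, coeff γ1 f ≠ 0 := by
    by_contra h
    push_neg at h
    exact h0 (MvPowerSeries.ext fun γ => by simp [h γ])
  obtain ⟨γ1, hγ1⟩ := hex
  have hv1 : 0 < gv F r f γ1 := mul_pos (norm_pos_iff.mpr hγ1) (pow_pos hr _)
  have hfin := finite_gv_ge F hf hr.le hv1
  have hne : γ1 ∈ hfin.toFinset := by simp [Set.Finite.mem_toFinset]
  obtain ⟨γ0, hγ0mem, hγ0max⟩ := hfin.toFinset.exists_max_image (gv F r f) ⟨γ1, hne⟩
  refine ⟨γ0, lt_of_lt_of_le hv1 (hγ0max γ1 hne), fun γ => ?_⟩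
  by_cases hγ : γ ∈ hfin.toFinset
  · exact hγ0max γ hγ
  · simp only [Set.Finite.mem_toFinset, Set.mem_setOf_eq, not_le] at hγ
    exact hγ.le.trans (hγ0max γ1 hne)

end Glue
section Glue2

variable {m : ℕ}

lemma gv_mul_le {r : ℝ} (hr : 0 ≤ r) {f g : MvPowerSeries (Fin m) F} {Mf Mg : ℝ}
    (hMf : ∀ γ, gv F r f γ ≤ Mf) (hMg : ∀ γ, gv F r g γ ≤ Mg) (δ : Fin m →₀ ℕ) :
    gv F r (f * g) δ ≤ Mf * Mg := by
  have hMf0 : 0 ≤ Mf := le_trans (gv_nonneg F hr f 0) (hMf 0)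
  have hMg0 : 0 ≤ Mg := le_trans (gv_nonneg F hr g 0) (hMg 0)
  have hne : (Finset.HasAntidiagonal.antidiagonal δ).Nonempty := ⟨(δ, 0), by simp⟩
  obtain ⟨p, hp, hple⟩ := IsUltrametricDist.exists_norm_finset_sum_le_of_nonempty hne
    (fun p : (Fin m →₀ ℕ) × (Fin m →₀ ℕ) => coeff p.1 f * coeff p.2 g)
  have hpsum : p.1 + p.2 = δ := Finset.HasAntidiagonal.mem_antidiagonal.mp hp
  calc gv F r (f * g) δ = ‖coeff δ (f * g)‖ * r ^ mdeg δ := rfl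
    _ ≤ ‖coeff p.1 f * coeff p.2 g‖ * r ^ mdeg δ := by
        refine mul_le_mul_of_nonneg_right ?_ (pow_nonneg hr _)
        rw [MvPowerSeries.coeff_mul]; exact hple
    _ = gv F r f p.1 * gv F r g p.2 := by
        rw [norm_mul, ← hpsum, mdeg_add, pow_add, gv, gv]; ring
    _ ≤ Mf * Mg := mul_le_mul (hMf p.1) (hMg p.2) (gv_nonneg F hr g p.2) hMf0

lemma gv_mono {r R : ℝ} (h0 : 0 < r) (hrR : r ≤ R) (f : MvPowerSeries (Fin m) F)
    (γ : Fin m →₀ ℕ) : gv F r f γ ≤ gv F R f γ :=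
  mul_le_mul_of_nonneg_left (pow_le_pow_left₀ h0.le hrR _) (norm_nonneg _)

lemma one_le_mdeg {γ : Fin m →₀ ℕ} (h : γ ≠ 0) : 1 ≤ mdeg γ := by
  obtain ⟨i, hi⟩ := Finsupp.support_nonempty_iff.mpr h
  have h1 : 1 ≤ γ i := Nat.one_le_iff_ne_zero.mpr (Finsupp.mem_support_iff.mp hi)
  calc 1 ≤ γ i := h1
    _ ≤ mdeg γ := Finset.single_le_sum (f := fun i => γ i) (fun _ _ => Nat.zero_le _) hi

lemma gv_shrink {r R : ℝ} (h0 : 0 < r) (hrR : r ≤ R) {f : MvPowerSeries (Fin m) F}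
    (hc : coeff 0 f = 0) {M' : ℝ} (hM : ∀ γ, gv F R f γ ≤ M') :
    ∀ γ, gv F r f γ ≤ r / R * M' := by
  have hR0 : 0 < R := lt_of_lt_of_le h0 hrR
  have hM0 : 0 ≤ M' := le_trans (gv_nonneg F hR0.le f 0) (hM 0)
  have hq0 : 0 ≤ r / R := div_nonneg h0.le hR0.le
  have hq1 : r / R ≤ 1 := div_le_one_of_le₀ hrR hR0.le
  intro γ
  by_cases hγ : γ = 0
  · subst hγ
    rw [gv_zero_index, hc, norm_zero]
    positivity
  · have hd := one_le_mdeg hγ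
    have key : gv F r f γ = gv F R f γ * (r / R) ^ mdeg γ := by
      rw [gv, gv, div_pow, mul_assoc]
      congr 1
      rw [mul_div_assoc', mul_comm, mul_div_assoc, div_self (pow_ne_zero _ hR0.ne'), mul_one]
    rw [key]
    calc gv F R f γ * (r / R) ^ mdeg γ ≤ M' * (r / R) ^ 1 :=
        mul_le_mul (hM γ) (pow_le_pow_of_le_one hq0 hq1 hd) (pow_nonneg hq0 _) hM0
      _ = r / R * M' := by ring

/-- Base-`B` encoding of a multi-index. -/
def encf (B : ℕ) (f : Fin m → ℕ) : ℕ := ∑ i, f i * B ^ (i : ℕ)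

lemma encf_add (B : ℕ) (α β : Fin m →₀ ℕ) :
    encf B ⇑(α + β) = encf B ⇑α + encf B ⇑β := by
  simp [encf, add_mul, Finset.sum_add_distrib]

lemma encf_inj : ∀ {m : ℕ} (B : ℕ) (f g : Fin m → ℕ), (∀ i, f i < B) → (∀ i, g i < B) →
    encf B f = encf B g → f = g := by
  intro m
  induction m with
  | zero => intro B f g _ _ _; funext i; exact i.elim0
  | succ n ih =>
    intro B f g hf hg h
    have hB : 0 < B := lt_of_le_of_lt (Nat.zero_le _) (hf 0)
    have expand : ∀ (f : Fin (n+1) → ℕ),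
        encf B f = f 0 + B * encf B (fun i : Fin n => f i.succ) := by
      intro f
      unfold encf
      rw [Fin.sum_univ_succ]
      simp only [Fin.val_zero, pow_zero, mul_one, Fin.val_succ]
      congr 1
      rw [Finset.mul_sum]
      refine Finset.sum_congr rfl fun i _ => ?_
      rw [pow_succ]; ring
    rw [expand f, expand g] at h
    have h0 : f 0 = g 0 := by
      have := congrArg (· % B) h
      simpa [Nat.add_mul_mod_self_left, Nat.mod_eq_of_lt (hf 0), Nat.mod_eq_of_lt (hg 0)]
        using this
    have h1 : encf B (fun i : Fin n => f i.succ) = encf B (fun i : Fin n => g i.succ) := by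
      rw [h0] at h
      exact Nat.eq_of_mul_eq_mul_left hB (by omega)
    have htail := ih B _ _ (fun i => hf i.succ) (fun i => hg i.succ) h1
    funext i
    refine Fin.cases h0 (fun j => ?_) i
    exact congrFun htail j

lemma norm_sum_lt {ι : Type*} (s : Finset ι) (x : ι → F) {t : ℝ} (ht : 0 < t)
    (h : ∀ p ∈ s, ‖x p‖ < t) : ‖∑ p ∈ s, x p‖ < t := by
  rcases s.eq_empty_or_nonempty with rfl | hne
  · simpa using ht
  · obtain ⟨i, hi, hle⟩ := IsUltrametricDist.exists_norm_finset_sum_le_of_nonempty hne x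
    exact lt_of_le_of_lt hle (h i hi)

lemma norm_add_eq_left {a b : F} (h : ‖b‖ < ‖a‖) : ‖a + b‖ = ‖a‖ := by
  rw [IsUltrametricDist.norm_add_eq_max_of_norm_ne_norm (ne_of_gt h)]
  exact max_eq_left h.le

end Glue2
section Glue3

variable {m : ℕ}

lemma finsupp_add_eq_zero {α β : Fin m →₀ ℕ} (h : α + β = 0) : α = 0 ∧ β = 0 := by
  constructor <;> ext i <;>
  · have := congrArg (fun γ : Fin m →₀ ℕ => γ i) h
    simp only [Finsupp.add_apply, Finsupp.zero_apply] at this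
    simp only [Finsupp.zero_apply]
    omega

/-- Units of `A^m(r)` have a dominant constant coefficient. -/
lemma unit_bound {r : ℝ} (hr : 0 < r) {u v : MvPowerSeries (Fin m) F}
    (hu : u ∈ A F m r) (hv : v ∈ A F m r) (huv : u * v = 1) :
    0 < ‖coeff 0 u‖ ∧ ∃ c : ℝ, 0 ≤ c ∧ c < 1 ∧
      ∀ γ, γ ≠ 0 → gv F r u γ ≤ c * ‖coeff 0 u‖ := by
  have hone : (1 : MvPowerSeries (Fin m) F) ≠ 0 := one_ne_zero
  have hu0 : u ≠ 0 := by rintro rfl; rw [zero_mul] at huv; exact hone huv.symm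
  have hv0 : v ≠ 0 := by rintro rfl; rw [mul_zero] at huv; exact hone huv.symm
  obtain ⟨γu, hγupos, hγumax⟩ := exists_gv_max F hu hr hu0
  obtain ⟨δv, hδvpos, hδvmax⟩ := exists_gv_max F hv hr hv0
  set Mu := gv F r u γu with hMu
  set Mv := gv F r v δv with hMv
  have hSu : {γ : Fin m →₀ ℕ | Mu ≤ gv F r u γ}.Finite := finite_gv_ge F hu hr.le hγupos
  have hSv : {γ : Fin m →₀ ℕ | Mv ≤ gv F r v γ}.Finite := finite_gv_ge F hv hr.le hδvpos
  classical
  set T : Finset (Fin m →₀ ℕ) := hSu.toFinset ∪ hSv.toFinset with hT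
  set N : ℕ := T.sup (fun γ => Finset.univ.sup fun i => γ i) with hN
  have hNle : ∀ γ ∈ T, ∀ i, γ i ≤ N := fun γ hγ i =>
    le_trans (Finset.le_sup (f := fun i => γ i) (Finset.mem_univ i))
      (Finset.le_sup (f := fun γ : Fin m →₀ ℕ => Finset.univ.sup fun i => γ i) hγ)
  set B : ℕ := 2 * N + 2 with hB
  have hmemT : ∀ γ, Mu ≤ gv F r u γ → γ ∈ T := fun γ h => by
    simp [hT, Set.Finite.mem_toFinset]; left; exact h
  have hmemT' : ∀ γ, Mv ≤ gv F r v γ → γ ∈ T := fun γ h => by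
    simp [hT, Set.Finite.mem_toFinset]; right; exact h
  obtain ⟨γ0, hγ0mem, hγ0max⟩ := hSu.toFinset.exists_max_image (fun γ => encf B ⇑γ)
    ⟨γu, by simp [Set.Finite.mem_toFinset]; exact le_rfl⟩
  obtain ⟨δ0, hδ0mem, hδ0max⟩ := hSv.toFinset.exists_max_image (fun γ => encf B ⇑γ)
    ⟨δv, by simp [Set.Finite.mem_toFinset]; exact le_rfl⟩
  have hγ0att : gv F r u γ0 = Mu :=
    le_antisymm (hγumax γ0) (by simpa [Set.Finite.mem_toFinset] using hγ0mem)
  have hδ0att : gv F r v δ0 = Mv :=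
    le_antisymm (hδvmax δ0) (by simpa [Set.Finite.mem_toFinset] using hδ0mem)
  have hγ0T : γ0 ∈ T := hmemT γ0 hγ0att.ge
  have hδ0T : δ0 ∈ T := hmemT' δ0 hδ0att.ge
  -- the key Gauss computation
  have key : gv F r (u * v) (γ0 + δ0) = Mu * Mv := by
    set s := γ0 + δ0 with hs
    have hrpow : (0:ℝ) < r ^ mdeg s := pow_pos hr _
    have hp0 : ((γ0, δ0) : (Fin m →₀ ℕ) × (Fin m →₀ ℕ)) ∈ Finset.HasAntidiagonal.antidiagonal s :=
      Finset.HasAntidiagonal.mem_antidiagonal.mpr rfl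
    have hrest : ‖∑ p ∈ (Finset.HasAntidiagonal.antidiagonal s).erase (γ0, δ0),
        coeff p.1 u * coeff p.2 v‖ < Mu * Mv / r ^ mdeg s := by
      refine norm_sum_lt F _ _ (by positivity) ?_
      intro p hp
      obtain ⟨hpne, hpmem⟩ := Finset.mem_erase.mp hp
      have hpsum : p.1 + p.2 = s := Finset.HasAntidiagonal.mem_antidiagonal.mp hpmem
      have hlt : gv F r u p.1 * gv F r v p.2 < Mu * Mv := by
        by_cases h1 : Mu ≤ gv F r u p.1
        · have e1 : gv F r u p.1 = Mu := le_antisymm (hγumax p.1) h1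
          by_cases h2 : Mv ≤ gv F r v p.2
          · exfalso
            have e2 : gv F r v p.2 = Mv := le_antisymm (hδvmax p.2) h2
            have hm1 : p.1 ∈ hSu.toFinset := by simp [Set.Finite.mem_toFinset]; exact h1
            have hm2 : p.2 ∈ hSv.toFinset := by simp [Set.Finite.mem_toFinset]; exact h2
            have hle1 : encf B ⇑p.1 ≤ encf B ⇑γ0 := hγ0max p.1 hm1
            have hle2 : encf B ⇑p.2 ≤ encf B ⇑δ0 := hδ0max p.2 hm2
            have hsum : encf B ⇑p.1 + encf B ⇑p.2 = encf B ⇑γ0 + encf B ⇑δ0 := by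
              rw [← encf_add, ← encf_add, hpsum]
            have e1' : encf B ⇑p.1 = encf B ⇑γ0 := by omega
            have e2' : encf B ⇑p.2 = encf B ⇑δ0 := by omega
            have hdig : ∀ i, p.1 i < B ∧ p.2 i < B ∧ γ0 i < B ∧ δ0 i < B := by
              intro i
              have h1' : γ0 i ≤ N := hNle γ0 hγ0T i
              have h2' : δ0 i ≤ N := hNle δ0 hδ0T i
              have h3' : p.1 i + p.2 i = γ0 i + δ0 i := by
                have := congrArg (fun γ : Fin m →₀ ℕ => γ i) hpsum
                simpa [hs] using this
              omega
            have hp1 : p.1 = γ0 := DFunLike.coe_injective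
              (encf_inj B _ _ (fun i => (hdig i).1) (fun i => (hdig i).2.2.1) e1')
            have hp2 : p.2 = δ0 := DFunLike.coe_injective
              (encf_inj B _ _ (fun i => (hdig i).2.1) (fun i => (hdig i).2.2.2) e2')
            exact hpne (Prod.ext hp1 hp2)
          · push_neg at h2
            rw [e1]
            exact mul_lt_mul_of_pos_left h2 (lt_of_lt_of_le hγupos (le_of_eq rfl))
        · push_neg at h1
          calc gv F r u p.1 * gv F r v p.2 ≤ gv F r u p.1 * Mv :=
              mul_le_mul_of_nonneg_left (hδvmax p.2) (gv_nonneg F hr.le u p.1)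
            _ < Mu * Mv := mul_lt_mul_of_pos_right h1 hδvpos
      rw [lt_div_iff₀ hrpow]
      calc ‖coeff p.1 u * coeff p.2 v‖ * r ^ mdeg s
          = gv F r u p.1 * gv F r v p.2 := by
            rw [norm_mul, ← hpsum, mdeg_add, pow_add, gv, gv]; ring
        _ < Mu * Mv := hlt
    have hd : ‖coeff γ0 u * coeff δ0 v‖ = Mu * Mv / r ^ mdeg s := by
      rw [eq_div_iff hrpow.ne']
      calc ‖coeff γ0 u * coeff δ0 v‖ * r ^ mdeg s
          = gv F r u γ0 * gv F r v δ0 := by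
            rw [norm_mul, hs, mdeg_add, pow_add, gv, gv]; ring
        _ = Mu * Mv := by rw [hγ0att, hδ0att]
    have : gv F r (u * v) s = ‖coeff γ0 u * coeff δ0 v‖ * r ^ mdeg s := by
      rw [gv, MvPowerSeries.coeff_mul, ← Finset.add_sum_erase _ _ hp0]
      congr 1
      exact norm_add_eq_left F (by rw [hd]; exact hrest)
    rw [this, hd, div_mul_cancel₀ _ hrpow.ne']
  rw [huv] at key
  -- deduce γ0 + δ0 = 0
  have hs0 : γ0 + δ0 = 0 := by
    by_contra hne
    have : gv F r (1 : MvPowerSeries (Fin m) F) (γ0 + δ0) = 0 := by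
      simp [gv, MvPowerSeries.coeff_one, hne]
    rw [this] at key
    exact absurd key.symm (ne_of_gt (mul_pos hγupos hδvpos))
  obtain ⟨hγ00, hδ00⟩ := finsupp_add_eq_zero hs0
  have hMu1 : Mu = ‖coeff 0 u‖ := by rw [← hγ0att, hγ00, gv_zero_index]
  have hupos : 0 < ‖coeff 0 u‖ := hMu1 ▸ hγupos
  refine ⟨hupos, ?_⟩
  -- strictness: any γ ≠ 0 has gv < Mu
  have hstrict : ∀ γ : Fin m →₀ ℕ, γ ≠ 0 → gv F r u γ < Mu := by
    intro γ hγ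
    rcases lt_or_ge (gv F r u γ) Mu with h | h
    · exact h
    · exfalso
      have hm : γ ∈ hSu.toFinset := by simp [Set.Finite.mem_toFinset]; exact h
      have hle : encf B ⇑γ ≤ encf B ⇑γ0 := hγ0max γ hm
      have h0' : encf B ⇑γ0 = 0 := by
        rw [hγ00]; simp [encf]
      have hγT : γ ∈ T := hmemT γ h
      have hdig : ∀ i, γ i < B := fun i => lt_of_le_of_lt (hNle γ hγT i) (by omega)
      have hz : encf B ⇑γ = 0 := by omega
      have : γ = 0 := by
        refine DFunLike.coe_injective (encf_inj B _ _ hdig (fun i => by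
          simp only [Finsupp.coe_zero, Pi.zero_apply]; omega) ?_)
        rw [hz]; simp [encf]
      exact hγ this
  -- uniform bound
  have hhalf : 0 < Mu / 2 := by positivity
  have hT2 : {γ : Fin m →₀ ℕ | Mu / 2 ≤ gv F r u γ}.Finite := finite_gv_ge F hu hr.le hhalf
  set E : Finset ℝ := insert (Mu / 2) ((hT2.toFinset.erase 0).image (gv F r u)) with hE
  have hEne : E.Nonempty := ⟨Mu / 2, Finset.mem_insert_self _ _⟩
  set c0 := E.max' hEne with hc0
  have hc0lt : c0 < Mu := by
    rw [hc0]
    refine (Finset.max'_lt_iff E hEne).mpr ?_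
    intro b hb
    rcases Finset.mem_insert.mp hb with rfl | hb
    · linarith
    · obtain ⟨γ, hγmem, rfl⟩ := Finset.mem_image.mp hb
      obtain ⟨hγne, _⟩ := Finset.mem_erase.mp hγmem
      exact hstrict γ hγne
  have hc0ge : Mu / 2 ≤ c0 := Finset.le_max' _ _ (Finset.mem_insert_self _ _)
  have hball : ∀ γ, γ ≠ 0 → gv F r u γ ≤ c0 := by
    intro γ hγ
    by_cases hmem : Mu / 2 ≤ gv F r u γ
    · refine Finset.le_max' _ _ ?_
      refine Finset.mem_insert_of_mem (Finset.mem_image.mpr ⟨γ, ?_, rfl⟩)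
      refine Finset.mem_erase.mpr ⟨hγ, ?_⟩
      simp only [Set.Finite.mem_toFinset, Set.mem_setOf_eq]
      exact hmem
    · push_neg at hmem; linarith
  refine ⟨c0 / ‖coeff 0 u‖, div_nonneg (by linarith) hupos.le, ?_, ?_⟩
  · rw [div_lt_one hupos, ← hMu1]; exact hc0lt
  · intro γ hγ
    rw [div_mul_cancel₀ _ hupos.ne']
    exact hball γ hγ

end Glue3
section Glue4

variable {m : ℕ}

lemma exists_coeff_limit [CompleteSpace F] (f : ℕ → MvPowerSeries (Fin m) F)
    (h : ∀ γ : Fin m →₀ ℕ, CauchySeq fun n => coeff γ (f n)) :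
    ∃ L : MvPowerSeries (Fin m) F,
      ∀ γ, Tendsto (fun n => coeff γ (f n)) atTop (nhds (coeff γ L)) := by
  choose l hl using fun γ => cauchySeq_tendsto_of_complete (h γ)
  exact ⟨(l : MvPowerSeries (Fin m) F), fun γ => hl γ⟩

lemma cauchy_of_gv {r : ℝ} (hr : 0 < r) (f : ℕ → MvPowerSeries (Fin m) F) (ε : ℕ → ℝ)
    (hanti : Antitone ε)
    (hb : ∀ i j, i ≤ j → ∀ γ, gv F r (f j - f i) γ ≤ ε i)
    (hε : Tendsto ε atTop (nhds 0)) (γ : Fin m →₀ ℕ) :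
    CauchySeq fun n => coeff γ (f n) := by
  have hrp : (0:ℝ) < r ^ mdeg γ := pow_pos hr _
  apply cauchySeq_of_le_tendsto_0 (b := fun n => ε n / r ^ mdeg γ)
  · have key : ∀ a b N, a ≤ b → N ≤ a →
        dist (coeff γ (f a)) (coeff γ (f b)) ≤ ε N / r ^ mdeg γ := by
      intro a b N hab hNa
      rw [dist_eq_norm]
      have h1 := hb a b hab γ
      rw [gv, map_sub] at h1
      have h2 : ‖coeff γ (f a) - coeff γ (f b)‖ ≤ ε a / r ^ mdeg γ := by
        rw [norm_sub_rev, le_div_iff₀ hrp]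
        exact h1
      refine h2.trans ?_
      gcongr
      exact hanti hNa
    intro a b N hNa hNb
    rcases le_total a b with hab | hab
    · exact key a b N hab hNa
    · rw [dist_comm]; exact key b a N hab hNb
  · simpa using hε.div_const (r ^ mdeg γ)

lemma gv_tendsto (f : ℕ → MvPowerSeries (Fin m) F) (L : MvPowerSeries (Fin m) F)
    (h : ∀ γ, Tendsto (fun n => coeff γ (f n)) atTop (nhds (coeff γ L)))
    (g : MvPowerSeries (Fin m) F) (r : ℝ) (γ : Fin m →₀ ℕ) :
    Tendsto (fun n => gv F r (f n - g) γ) atTop (nhds (gv F r (L - g) γ)) := by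
  unfold gv
  simp only [map_sub]
  exact (((h γ).sub_const _).norm).mul_const _

lemma mem_A_of_tendsto {r : ℝ} (hr : 0 < r) (f : ℕ → MvPowerSeries (Fin m) F)
    (L : MvPowerSeries (Fin m) F) (hm : ∀ n, f n ∈ A F m r) (ε : ℕ → ℝ)
    (hε : Tendsto ε atTop (nhds 0)) (htail : ∀ n γ, gv F r (L - f n) γ ≤ ε n) :
    L ∈ A F m r := by
  rw [mem_A_iff_gv, Metric.tendsto_nhds]
  intro δ hδ
  rw [eventually_cofinite]
  obtain ⟨n, hn⟩ : ∃ n, ε n < δ := (hε.eventually (gt_mem_nhds hδ)).exists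
  refine (finite_gv_ge F (hm n) hr.le hδ).subset ?_
  intro γ hγ
  simp only [Set.mem_setOf_eq, Real.dist_eq, sub_zero, not_lt] at hγ
  rw [abs_of_nonneg (gv_nonneg F hr.le L γ)] at hγ
  by_contra hcon
  simp only [Set.mem_setOf_eq, not_le] at hcon
  have h1 : gv F r L γ ≤ max (gv F r (L - f n) γ) (gv F r (f n) γ) := by
    have := gv_add_le F hr.le (L - f n) (f n) γ
    simpa [sub_add_cancel] using this
  have h2 : gv F r L γ < δ := lt_of_le_of_lt h1 (max_lt (lt_of_le_of_lt (htail n γ) hn) hcon)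
  exact absurd hγ (not_le.mpr h2)

lemma tendsto_coeff_mul (f : ℕ → MvPowerSeries (Fin m) F) (L w : MvPowerSeries (Fin m) F)
    (h : ∀ γ, Tendsto (fun n => coeff γ (f n)) atTop (nhds (coeff γ L)))
    (γ : Fin m →₀ ℕ) :
    Tendsto (fun n => coeff γ (f n * w)) atTop (nhds (coeff γ (L * w))) := by
  simp only [MvPowerSeries.coeff_mul]
  exact tendsto_finset_sum _ fun p _ => (h p.1).mul_const _

lemma exists_inverse [CompleteSpace F] {r : ℝ} (hr : 0 < r) {f : MvPowerSeries (Fin m) F}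
    (hf : f ∈ A F m r) {c : ℝ} (hc0 : 0 ≤ c) (hc1 : c < 1)
    (hfc : ∀ γ, gv F r (f - 1) γ ≤ c) :
    ∃ w ∈ A F m r, f * w = 1 := by
  set x : MvPowerSeries (Fin m) F := 1 - f with hxdef
  have hx : ∀ γ, gv F r x γ ≤ c := fun γ => by
    rw [show x = -(f - 1) by rw [hxdef]; ring, gv_neg]
    exact hfc γ
  have hxpow : ∀ n γ, gv F r (x ^ n) γ ≤ c ^ n := by
    intro n
    induction n with
    | zero => intro γ; simpa using gv_one_le F γ
    | succ n ih =>
      intro γ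
      rw [pow_succ, pow_succ]
      exact gv_mul_le F hr.le ih hx γ
  set S : ℕ → MvPowerSeries (Fin m) F := fun N => ∑ n ∈ Finset.range N, x ^ n with hSdef
  have hxmem : x ∈ A F m r := (A F m r).sub_mem ((A F m r).one_mem) hf
  have hSmem : ∀ N, S N ∈ A F m r := fun N =>
    Subring.sum_mem _ fun n _ => Subring.pow_mem _ hxmem n
  have hdiff : ∀ i j, i ≤ j → ∀ γ, gv F r (S j - S i) γ ≤ c ^ i := by
    intro i j hij
    induction j, hij using Nat.le_induction with
    | base => intro γ; simp only [sub_self]; rw [gv_zero]; positivity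
    | succ j hij ih =>
      intro γ
      have hstep : S (j + 1) - S i = x ^ j + (S j - S i) := by
        rw [hSdef]; simp only; rw [Finset.sum_range_succ]; ring
      rw [hstep]
      refine le_trans (gv_add_le F hr.le _ _ γ) (max_le ?_ (ih γ))
      exact le_trans (hxpow j γ) (pow_le_pow_of_le_one hc0 hc1.le hij)
  have hanti : Antitone fun n => c ^ n := fun a b hab =>
    pow_le_pow_of_le_one hc0 hc1.le hab
  have htend : Tendsto (fun n => c ^ n) atTop (nhds 0) :=
    tendsto_pow_atTop_nhds_zero_of_lt_one hc0 hc1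
  obtain ⟨W, hW⟩ := exists_coeff_limit F S (cauchy_of_gv F hr S _ hanti hdiff htend)
  have htail : ∀ i γ, gv F r (W - S i) γ ≤ c ^ i := by
    intro i γ
    refine le_of_tendsto (gv_tendsto F S W hW (S i) r γ) ?_
    filter_upwards [eventually_ge_atTop i] with j hj
    exact hdiff i j hj γ
  have hWmem : W ∈ A F m r := mem_A_of_tendsto F hr S W hSmem _ htend htail
  refine ⟨W, hWmem, ?_⟩
  apply MvPowerSeries.ext
  intro γ
  have h1 : Tendsto (fun N => coeff γ (S N * f)) atTop (nhds (coeff γ (W * f))) :=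
    tendsto_coeff_mul F S W f hW γ
  have hfS : ∀ N, S N * f = 1 - x ^ N := by
    intro N
    have hg := geom_sum_mul x N
    have hxf : x - 1 = -f := by rw [hxdef]; ring
    calc S N * f = -(S N * (x - 1)) := by rw [hxf]; ring
      _ = -(x ^ N - 1) := by rw [hSdef]; simp only; rw [hg]
      _ = 1 - x ^ N := by ring
  have h2 : Tendsto (fun N => coeff γ (S N * f)) atTop (nhds (coeff γ (1 : MvPowerSeries (Fin m) F))) := by
    simp only [hfS, map_sub]
    have hx0 : Tendsto (fun N => coeff γ (x ^ N)) atTop (nhds 0) := by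
      rw [tendsto_zero_iff_norm_tendsto_zero]
      refine squeeze_zero (g := fun N => c ^ N / r ^ mdeg γ) (fun N => norm_nonneg _) (fun N => ?_) ?_
      · exact (le_div_iff₀ (pow_pos hr _)).mpr (hxpow N γ)
      · simpa using htend.div_const (r ^ mdeg γ)
    simpa using tendsto_const_nhds.sub hx0
  have := tendsto_nhds_unique h1 h2
  rw [mul_comm f W]
  exact this

end Glue4
section Glue5

variable {m : ℕ}

lemma C_mem (r : ℝ) (a : F) : (MvPowerSeries.C (σ := Fin m) (R := F)) a ∈ A F m r := by
  rw [mem_A_iff_gv]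
  refine tendsto_const_nhds.congr' ?_
  refine Filter.eventuallyEq_of_mem
    ((Set.finite_singleton (0 : Fin m →₀ ℕ)).compl_mem_cofinite) ?_
  intro γ hγ
  have hne : γ ≠ 0 := by simpa using hγ
  simp [gv, MvPowerSeries.coeff_C, hne]

lemma div_anti_right {a x y : ℝ} (ha : 0 ≤ a) (hx : 0 < x) (hxy : x ≤ y) : a / y ≤ a / x := by
  gcongr

end Glue5
/-- Lütkebohmert's lemma: compatible families `g_i ∈ A^m(r_i)` differing
by units glue, up to units, to an entire function. -/
theorem statement16 [CompleteSpace F] [IsAlgClosed F]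
    (hnt : ∃ c : F, c ≠ 0 ∧ ‖c‖ ≠ 1)
    (m : ℕ) (r : ℕ → ℝ) (hVG : ∀ i, r i ∈ VG F)
    (hmono : StrictMono r) (htop : Tendsto r atTop atTop)
    (g : ∀ i : ℕ, A F m (r i))
    (u : ∀ i j : ℕ, i < j → (A F m (r i))ˣ)
    (hu : ∀ (i j : ℕ) (h : i < j),
      (g i : MvPowerSeries (Fin m) F) =
        ((u i j h : A F m (r i)) : MvPowerSeries (Fin m) F) *
          (g j : MvPowerSeries (Fin m) F)) :
    ∃ (G : Ent F m) (v : ∀ i : ℕ, (A F m (r i))ˣ),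
      ∀ i : ℕ, (g i : MvPowerSeries (Fin m) F) =
        (G : MvPowerSeries (Fin m) F) *
          ((v i : A F m (r i)) : MvPowerSeries (Fin m) F) := by
  classical
  by_cases hzero : ∃ i, (g i : MvPowerSeries (Fin m) F) = 0
  · obtain ⟨i0, hi0⟩ := hzero
    have hall : ∀ i, (g i : MvPowerSeries (Fin m) F) = 0 := by
      intro i
      rcases lt_trichotomy i i0 with h | h | h
      · rw [hu i i0 h, hi0, mul_zero]
      · rw [h]; exact hi0
      · have h1 := hu i0 i h
        rw [hi0] at h1
        have hne : ((u i0 i h : A F m (r i0)) : MvPowerSeries (Fin m) F) ≠ 0 := by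
          intro h0
          have h2 : ((u i0 i h : A F m (r i0)) : MvPowerSeries (Fin m) F) *
              ((((u i0 i h)⁻¹ : (A F m (r i0))ˣ) : A F m (r i0)) : MvPowerSeries (Fin m) F) = 1 := by
            exact_mod_cast congrArg Subtype.val (u i0 i h).mul_inv
          rw [h0, zero_mul] at h2
          exact one_ne_zero h2.symm
        rcases mul_eq_zero.mp h1.symm with h2 | h2
        · exact absurd h2 hne
        · exact h2
    exact ⟨0, fun i => 1, fun i => by simp [hall i]⟩
  push_neg at hzero
  have hr0 : ∀ i, 0 < r i := fun i => VG.pos F (hVG i)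
  have hrle : ∀ {i j : ℕ}, i ≤ j → r i ≤ r j := fun {i j} h => hmono.monotone h
  -- per-index unit data
  have key : ∀ i : ℕ, ∃ (q : MvPowerSeries (Fin m) F) (lam : F) (c : ℝ),
      q ∈ A F m (r i) ∧ coeff 0 q = 1 ∧ 0 ≤ c ∧ c < 1 ∧
      (∀ γ, γ ≠ 0 → gv F (r i) q γ ≤ c) ∧ lam ≠ 0 ∧
      q * (g i : MvPowerSeries (Fin m) F) =
        (MvPowerSeries.C (σ := Fin m) (R := F)) lam * (g (i+1) : MvPowerSeries (Fin m) F) := by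
    intro i
    set U := u i (i+1) (Nat.lt_succ_self i) with hU
    have hUmul : ((U : A F m (r i)) : MvPowerSeries (Fin m) F) *
        (((U⁻¹ : (A F m (r i))ˣ) : A F m (r i)) : MvPowerSeries (Fin m) F) = 1 := by
      exact_mod_cast congrArg Subtype.val U.mul_inv
    have hUmul' : (((U⁻¹ : (A F m (r i))ˣ) : A F m (r i)) : MvPowerSeries (Fin m) F) *
        ((U : A F m (r i)) : MvPowerSeries (Fin m) F) = 1 := by
      rw [mul_comm]; exact hUmul
    obtain ⟨hpos, c, hc0, hc1, hcb⟩ := unit_bound F (hr0 i)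
      (SetLike.coe_mem ((U⁻¹ : (A F m (r i))ˣ) : A F m (r i))) (SetLike.coe_mem ((U : (A F m (r i))ˣ) : A F m (r i))) hUmul'
    set lam : F := coeff 0 ((U : A F m (r i)) : MvPowerSeries (Fin m) F) with hlam
    have hconst : lam * coeff 0 (((U⁻¹ : (A F m (r i))ˣ) : A F m (r i)) : MvPowerSeries (Fin m) F) = 1 := by
      have h1 := congrArg ((MvPowerSeries.constantCoeff (σ := Fin m) (R := F))) hUmul
      rw [map_one, map_mul] at h1
      rw [hlam, MvPowerSeries.coeff_zero_eq_constantCoeff_apply,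
        MvPowerSeries.coeff_zero_eq_constantCoeff_apply]
      exact h1
    have hlamne : lam ≠ 0 := left_ne_zero_of_mul_eq_one hconst
    have hnorm1 : ‖lam‖ * ‖coeff 0 (((U⁻¹ : (A F m (r i))ˣ) : A F m (r i)) : MvPowerSeries (Fin m) F)‖ = 1 := by
      rw [← norm_mul, hconst, norm_one]
    refine ⟨(MvPowerSeries.C (σ := Fin m) (R := F)) lam * (((U⁻¹ : (A F m (r i))ˣ) : A F m (r i)) : MvPowerSeries (Fin m) F),
      lam, c, ?_, ?_, hc0, hc1, ?_, hlamne, ?_⟩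
    · exact (A F m (r i)).mul_mem (C_mem F _ _) (SetLike.coe_mem _)
    · rw [MvPowerSeries.coeff_C_mul]; exact hconst
    · intro γ hγ
      have hg : gv F (r i) ((MvPowerSeries.C (σ := Fin m) (R := F)) lam *
          (((U⁻¹ : (A F m (r i))ˣ) : A F m (r i)) : MvPowerSeries (Fin m) F)) γ =
          ‖lam‖ * gv F (r i) (((U⁻¹ : (A F m (r i))ˣ) : A F m (r i)) : MvPowerSeries (Fin m) F) γ := by
        rw [gv, gv, MvPowerSeries.coeff_C_mul, norm_mul]; ring
      rw [hg]
      calc ‖lam‖ * gv F (r i) (((U⁻¹ : (A F m (r i))ˣ) : A F m (r i)) : MvPowerSeries (Fin m) F) γ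
          ≤ ‖lam‖ * (c * ‖coeff 0 (((U⁻¹ : (A F m (r i))ˣ) : A F m (r i)) : MvPowerSeries (Fin m) F)‖) :=
            mul_le_mul_of_nonneg_left (hcb γ hγ) (norm_nonneg _)
        _ = c * (‖lam‖ * ‖coeff 0 (((U⁻¹ : (A F m (r i))ˣ) : A F m (r i)) : MvPowerSeries (Fin m) F)‖) := by ring
        _ = c := by rw [hnorm1, mul_one]
    · have hgi := hu i (i+1) (Nat.lt_succ_self i)
      rw [← hU] at hgi
      rw [mul_assoc _ _ ((g i : MvPowerSeries (Fin m) F)), hgi, ← mul_assoc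
        (((U⁻¹ : (A F m (r i))ˣ) : A F m (r i)) : MvPowerSeries (Fin m) F), hUmul', one_mul]
  choose q lam c hqmem hq0 hc0 hc1 hqc hlamne hrel using key
  have hq1 : ∀ i γ, gv F (r i) (q i) γ ≤ 1 := by
    intro i γ
    by_cases hγ : γ = 0
    · subst hγ; rw [gv_zero_index, hq0 i, norm_one]
    · exact (hqc i γ hγ).trans (hc1 i).le
  have hqsub0 : ∀ i, coeff 0 (q i - 1) = 0 := fun i => by
    rw [map_sub, hq0 i, MvPowerSeries.coeff_one, if_pos rfl, sub_self]
  have hqsub : ∀ i γ, gv F (r i) (q i - 1) γ ≤ c i := by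
    intro i γ
    by_cases hγ : γ = 0
    · subst hγ; rw [gv_zero_index, hqsub0 i, norm_zero]; exact hc0 i
    · have hcoe : coeff γ (q i - 1) = coeff γ (q i) := by
        rw [map_sub, MvPowerSeries.coeff_one, if_neg hγ, sub_zero]
      rw [gv, hcoe]
      exact hqc i γ hγ
  -- normalized sequence
  set Λ : ℕ → F := fun i => ∏ k ∈ Finset.range i, lam k with hΛ
  have hΛne : ∀ i, Λ i ≠ 0 := fun i => Finset.prod_ne_zero_iff.mpr fun k _ => hlamne k
  set w : ℕ → MvPowerSeries (Fin m) F :=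
    fun i => (MvPowerSeries.C (σ := Fin m) (R := F)) (Λ i) * (g i : MvPowerSeries (Fin m) F) with hwdef
  have hwstep : ∀ i, w (i + 1) = q i * w i := by
    intro i
    have hΛs : Λ (i+1) = Λ i * lam i := Finset.prod_range_succ _ _
    calc w (i+1) = (MvPowerSeries.C (σ := Fin m) (R := F)) (Λ i) * ((MvPowerSeries.C (σ := Fin m) (R := F)) (lam i) *
          (g (i+1) : MvPowerSeries (Fin m) F)) := by
          rw [hwdef]; simp only; rw [hΛs, map_mul]; ring
      _ = (MvPowerSeries.C (σ := Fin m) (R := F)) (Λ i) * (q i * (g i : MvPowerSeries (Fin m) F)) := by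
          rw [← hrel i]
      _ = q i * w i := by rw [hwdef]; ring
  have hwmem : ∀ s i, s ≤ i → w i ∈ A F m (r s) := by
    intro s i hsi
    exact A_mono F (hr0 s) (hrle hsi)
      ((A F m (r i)).mul_mem (C_mem F _ _) (SetLike.coe_mem _))
  have hqmem' : ∀ s i, s ≤ i → q i ∈ A F m (r s) :=
    fun s i hsi => A_mono F (hr0 s) (hrle hsi) (hqmem i)
  have hq1' : ∀ s i γ, s ≤ i → gv F (r s) (q i) γ ≤ 1 :=
    fun s i γ hsi => (gv_mono F (hr0 s) (hrle hsi) _ γ).trans (hq1 i γ)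
  have hqsub' : ∀ s i, s ≤ i → ∀ γ, gv F (r s) (q i - 1) γ ≤ r s / r i := by
    intro s i hsi γ
    have h1 := gv_shrink F (hr0 s) (hrle hsi) (hqsub0 i) (hqsub i) γ
    refine h1.trans ?_
    calc r s / r i * c i ≤ r s / r i * 1 :=
        mul_le_mul_of_nonneg_left (hc1 i).le (div_nonneg (hr0 s).le (hr0 i).le)
      _ = r s / r i := mul_one _
  -- uniform bounds on w at each radius
  have hMs : ∀ s, ∃ Ms : ℝ, 0 < Ms ∧ ∀ i γ, s ≤ i → gv F (r s) (w i) γ ≤ Ms := by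
    intro s
    obtain ⟨Ms, hMs0, hMsb⟩ := exists_gv_bound F (hwmem s s le_rfl) (hr0 s).le
    refine ⟨Ms, hMs0, ?_⟩
    have hind : ∀ i, s ≤ i → ∀ γ, gv F (r s) (w i) γ ≤ Ms := by
      intro i hsi
      induction i, hsi using Nat.le_induction with
      | base => exact hMsb
      | succ i hsi ih =>
        intro γ
        rw [hwstep i]
        simpa using gv_mul_le F (hr0 s).le (fun γ => hq1' s i γ hsi) ih γ
    exact fun i γ hsi => hind i hsi γ
  -- Cauchy differences
  have hdiffw : ∀ s Ms, 0 < Ms → (∀ i γ, s ≤ i → gv F (r s) (w i) γ ≤ Ms) →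
      ∀ i j, s ≤ i → i ≤ j → ∀ γ, gv F (r s) (w j - w i) γ ≤ r s / r i * Ms := by
    intro s Ms hMs0 hMsb i j hsi hij
    induction j, hij using Nat.le_induction with
    | base =>
      intro γ
      simp only [sub_self]
      rw [gv_zero]
      exact mul_nonneg (div_nonneg (hr0 s).le (hr0 i).le) hMs0.le
    | succ j hij ih =>
      intro γ
      have hsj : s ≤ j := le_trans hsi hij
      have hstep : w (j+1) - w i = (q j - 1) * w j + (w j - w i) := by
        rw [hwstep j]; ring
      rw [hstep]
      refine le_trans (gv_add_le F (hr0 s).le _ _ γ) (max_le ?_ (ih γ))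
      have h2 := gv_mul_le F (hr0 s).le (hqsub' s j hsj) (fun γ => hMsb j γ hsj) γ
      refine h2.trans ?_
      exact mul_le_mul_of_nonneg_right
        (div_anti_right (hr0 s).le (hr0 i) (hrle hij)) hMs0.le
  obtain ⟨M0, hM00, hM0b⟩ := hMs 0
  have hdiff0 : ∀ i j, i ≤ j → ∀ γ, gv F (r 0) (w j - w i) γ ≤ r 0 / r i * M0 :=
    fun i j hij => hdiffw 0 M0 hM00 hM0b i j (Nat.zero_le i) hij
  have hεanti : ∀ s (Ms : ℝ), 0 ≤ Ms → Antitone fun i => r s / r i * Ms := by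
    intro s Ms hMs0 a b hab
    exact mul_le_mul_of_nonneg_right (div_anti_right (hr0 s).le (hr0 a) (hrle hab)) hMs0
  have hεtend : ∀ s (Ms : ℝ), Tendsto (fun i => r s / r i * Ms) atTop (nhds 0) := by
    intro s Ms
    have h1 : Tendsto (fun i => r s / r i) atTop (nhds 0) :=
      Filter.Tendsto.div_atTop tendsto_const_nhds htop
    simpa using h1.mul_const Ms
  obtain ⟨G0, hG0⟩ := exists_coeff_limit F w
    (fun γ => cauchy_of_gv F (hr0 0) w _ (hεanti 0 M0 hM00.le) hdiff0 (hεtend 0 M0) γ)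
  have htails : ∀ s Ms, 0 < Ms → (∀ i γ, s ≤ i → gv F (r s) (w i) γ ≤ Ms) →
      ∀ i, s ≤ i → ∀ γ, gv F (r s) (G0 - w i) γ ≤ r s / r i * Ms := by
    intro s Ms hMs0 hMsb i hsi γ
    refine le_of_tendsto (gv_tendsto F w G0 hG0 (w i) (r s) γ) ?_
    filter_upwards [eventually_ge_atTop i] with j hj
    exact hdiffw s Ms hMs0 hMsb i j hsi hj γ
  have hGmem : ∀ s, G0 ∈ A F m (r s) := by
    intro s
    obtain ⟨Ms, hMs0, hMsb⟩ := hMs s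
    refine mem_A_of_tendsto F (hr0 s) (fun n => w (n + s)) G0
      (fun n => hwmem s (n + s) (Nat.le_add_left s n)) (fun n => r s / r (n + s) * Ms) ?_ ?_
    · exact (hεtend s Ms).comp (tendsto_add_atTop_nat s)
    · intro n γ
      exact htails s Ms hMs0 hMsb (n + s) (Nat.le_add_left s n) γ
  have hGent : G0 ∈ Ent F m := by
    rw [mem_Ent_iff]
    intro ρ hρ
    obtain ⟨s, hs⟩ := (htop.eventually_ge_atTop ρ).exists
    exact A_mono F (VG.pos F hρ) hs (hGmem s)
  -- units
  have hvs : ∀ s : ℕ, ∃ v : (A F m (r s))ˣ,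
      (g s : MvPowerSeries (Fin m) F) =
        G0 * ((v : A F m (r s)) : MvPowerSeries (Fin m) F) := by
    intro s
    set P : ℕ → MvPowerSeries (Fin m) F := fun n => ∏ k ∈ Finset.range n, q (k + s) with hPdef
    have hP0 : P 0 = 1 := by rw [hPdef]; simp
    have hPstep : ∀ n, P (n+1) = P n * q (n + s) := fun n => Finset.prod_range_succ _ _
    have hPmem : ∀ n, P n ∈ A F m (r s) := fun n =>
      Subring.prod_mem _ fun k _ => hqmem' s (k + s) (Nat.le_add_left s k)
    set κ : ℝ := max (c s) (r s / r (s + 1)) with hκ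
    have hκ0 : 0 ≤ κ := le_trans (hc0 s) (le_max_left _ _)
    have hκ1 : κ < 1 := max_lt (hc1 s)
      ((div_lt_one (hr0 (s+1))).mpr (hmono (Nat.lt_succ_self s)))
    have hP1 : ∀ n γ, gv F (r s) (P n) γ ≤ 1 := by
      intro n
      induction n with
      | zero => intro γ; rw [hP0]; exact gv_one_le F γ
      | succ n ih =>
        intro γ
        rw [hPstep n]
        simpa using gv_mul_le F (hr0 s).le ih
          (fun γ => hq1' s (n + s) γ (Nat.le_add_left s n)) γ
    have hqsubκ : ∀ n γ, gv F (r s) (q (n + s) - 1) γ ≤ κ := by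
      intro n γ
      cases n with
      | zero =>
        have h0 : (0:ℕ) + s = s := Nat.zero_add s
        rw [h0]
        exact le_trans (hqsub s γ) (le_max_left _ _)
      | succ n =>
        have h1 := hqsub' s (n + 1 + s) (by omega) γ
        refine h1.trans (le_trans ?_ (le_max_right _ _))
        exact div_anti_right (hr0 s).le (hr0 (s+1)) (hrle (by omega))
    have hPsub : ∀ n γ, gv F (r s) (P n - 1) γ ≤ κ := by
      intro n
      induction n with
      | zero => intro γ; rw [hP0]; simp only [sub_self]; rw [gv_zero]; exact hκ0
      | succ n ih =>
        intro γ
        have hstep : P (n+1) - 1 = (q (n + s) - 1) * P n + (P n - 1) := by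
          rw [hPstep]; ring
        rw [hstep]
        refine le_trans (gv_add_le F (hr0 s).le _ _ γ) (max_le ?_ (ih γ))
        simpa using gv_mul_le F (hr0 s).le (hqsubκ n) (hP1 n) γ
    have hPdiff : ∀ i j, i ≤ j → ∀ γ, gv F (r s) (P j - P i) γ ≤ r s / r (i + s) := by
      intro i j hij
      induction j, hij using Nat.le_induction with
      | base =>
        intro γ
        simp only [sub_self]
        rw [gv_zero]
        exact div_nonneg (hr0 s).le (hr0 (i + s)).le
      | succ j hij ih =>
        intro γ
        have hstep : P (j+1) - P i = (q (j + s) - 1) * P j + (P j - P i) := by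
          rw [hPstep]; ring
        rw [hstep]
        refine le_trans (gv_add_le F (hr0 s).le _ _ γ) (max_le ?_ (ih γ))
        have h2 := gv_mul_le F (hr0 s).le (hqsub' s (j + s) (Nat.le_add_left s j)) (hP1 j) γ
        rw [mul_one] at h2
        refine h2.trans ?_
        exact div_anti_right (hr0 s).le (hr0 (i + s)) (hrle (by omega))
    have hεPanti : Antitone fun n : ℕ => r s / r (n + s) := fun a b hab =>
      div_anti_right (hr0 s).le (hr0 (a + s)) (hrle (by omega))
    have hεPtend : Tendsto (fun n : ℕ => r s / r (n + s)) atTop (nhds 0) := by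
      have h1 : Tendsto (fun i => r s / r i) atTop (nhds 0) :=
        Filter.Tendsto.div_atTop tendsto_const_nhds htop
      exact h1.comp (tendsto_add_atTop_nat s)
    obtain ⟨V, hV⟩ := exists_coeff_limit F P
      (fun γ => cauchy_of_gv F (hr0 s) P _ hεPanti hPdiff hεPtend γ)
    have hVtail : ∀ n γ, gv F (r s) (V - P n) γ ≤ r s / r (n + s) := by
      intro n γ
      refine le_of_tendsto (gv_tendsto F P V hV (P n) (r s) γ) ?_
      filter_upwards [eventually_ge_atTop n] with j hj
      exact hPdiff n j hj γ
    have hVmem : V ∈ A F m (r s) := mem_A_of_tendsto F (hr0 s) P V hPmem _ hεPtend hVtail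
    have hVsub : ∀ γ, gv F (r s) (V - 1) γ ≤ κ := by
      intro γ
      refine le_of_tendsto (gv_tendsto F P V hV 1 (r s) γ) ?_
      exact Filter.Eventually.of_forall fun n => hPsub n γ
    obtain ⟨W, hWmem, hVW⟩ := exists_inverse F (hr0 s) hVmem hκ0 hκ1 hVsub
    have hwP : ∀ n, w (n + s) = P n * w s := by
      intro n
      induction n with
      | zero => rw [hP0, one_mul, Nat.zero_add]
      | succ n ih =>
        have hidx : n + 1 + s = (n + s) + 1 := by omega
        rw [hidx, hwstep (n + s), ih, hPstep]
        ring
    have hGV : G0 = V * w s := by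
      apply MvPowerSeries.ext
      intro γ
      have t1 : Tendsto (fun n => coeff γ (w (n + s))) atTop (nhds (coeff γ G0)) :=
        (hG0 γ).comp (tendsto_add_atTop_nat s)
      simp only [hwP] at t1
      exact tendsto_nhds_unique t1 (tendsto_coeff_mul F P V (w s) hV γ)
    refine ⟨⟨⟨(MvPowerSeries.C (σ := Fin m) (R := F)) (Λ s)⁻¹ * W,
        (A F m (r s)).mul_mem (C_mem F _ _) hWmem⟩,
      ⟨(MvPowerSeries.C (σ := Fin m) (R := F)) (Λ s) * V,
        (A F m (r s)).mul_mem (C_mem F _ _) hVmem⟩, ?_, ?_⟩, ?_⟩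
    · apply Subtype.ext
      show ((MvPowerSeries.C (σ := Fin m) (R := F)) (Λ s)⁻¹ * W) * ((MvPowerSeries.C (σ := Fin m) (R := F)) (Λ s) * V)
        = 1
      calc ((MvPowerSeries.C (σ := Fin m) (R := F)) (Λ s)⁻¹ * W) * ((MvPowerSeries.C (σ := Fin m) (R := F)) (Λ s) * V)
          = ((MvPowerSeries.C (σ := Fin m) (R := F)) (Λ s)⁻¹ * (MvPowerSeries.C (σ := Fin m) (R := F)) (Λ s)) * (V * W) := by
            ring
        _ = 1 := by
            rw [← map_mul, inv_mul_cancel₀ (hΛne s), map_one, one_mul, hVW]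
    · apply Subtype.ext
      show ((MvPowerSeries.C (σ := Fin m) (R := F)) (Λ s) * V) * ((MvPowerSeries.C (σ := Fin m) (R := F)) (Λ s)⁻¹ * W)
        = 1
      calc ((MvPowerSeries.C (σ := Fin m) (R := F)) (Λ s) * V) * ((MvPowerSeries.C (σ := Fin m) (R := F)) (Λ s)⁻¹ * W)
          = ((MvPowerSeries.C (σ := Fin m) (R := F)) (Λ s)⁻¹ * (MvPowerSeries.C (σ := Fin m) (R := F)) (Λ s)) * (V * W) := by
            ring
        _ = 1 := by
            rw [← map_mul, inv_mul_cancel₀ (hΛne s), map_one, one_mul, hVW]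
    · show (g s : MvPowerSeries (Fin m) F) =
        G0 * ((MvPowerSeries.C (σ := Fin m) (R := F)) (Λ s)⁻¹ * W)
      have h1 : (g s : MvPowerSeries (Fin m) F) =
          (MvPowerSeries.C (σ := Fin m) (R := F)) (Λ s)⁻¹ * w s := by
        rw [hwdef]
        simp only
        rw [← mul_assoc, ← map_mul, inv_mul_cancel₀ (hΛne s), map_one, one_mul]
      rw [h1, hGV]
      have h2 : (V * w s) * ((MvPowerSeries.C (σ := Fin m) (R := F)) (Λ s)⁻¹ * W)
          = (MvPowerSeries.C (σ := Fin m) (R := F)) (Λ s)⁻¹ * ((V * W) * w s) := by ring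
      rw [h2, hVW, one_mul]
  choose v hv using hvs
  exact ⟨⟨G0, hGent⟩, v, hv⟩

end NA
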